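/- arXiv:2507.12613 — 3 statements merged into one kernel-verified Lean document; each statement's English description precedes it below -/
import Mathlib

section
/- In the model graph G, every edge joining two triangle-vertices T and T′ is contained in exactly two triangles of G: the common neighbours of T and T′ are exactly the dual vertices x̃ and ỹ, where {x, y} = T ∩ T′. -/
/-- Adjacency relation of the Farey graph on `Option ℚ`: `some x` and `some y` are
adjacent iff `|x.num * y.den - y.num * x.den| = 1`, and `none` (representing `∞`)
is adjacent to `some x` iff `x.den = 1`. -/
def fareyAdj : Option ℚ → Option ℚ → Prop
  | some x, some y => |x.num * (y.den : ℤ) - y.num * (x.den : ℤ)| = 1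
  | some x, none => x.den = 1
  | none, some x => x.den = 1
  | none, none => False

/-- The Farey graph `𝔽` on the vertex set `Option ℚ`. -/
def fareyGraph : SimpleGraph (Option ℚ) where
  Adj := fareyAdj
  symm := by
    constructor
    rintro (_ | x) (_ | y) h
    · exact h.elim
    · exact h
    · exact h
    · show |y.num * (x.den : ℤ) - x.num * (y.den : ℤ)| = 1
      rw [abs_sub_comm]
      exact h
  loopless := by
    constructor
    rintro (_ | x) h
    · exact h.elim
    · have : |x.num * (x.den : ℤ) - x.num * (x.den : ℤ)| = 1 := h
      simp at this

/-- A triangle of the Farey graph: a 3-element clique. -/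
def FareyTriangle : Type := {s : Finset (Option ℚ) // fareyGraph.IsNClique 3 s}

namespace FareyAux

def pr : Option ℚ → ℤ × ℤ
  | none => (1, 0)
  | some r => (r.num, (r.den : ℤ))

lemma pr_snd_nonneg (u : Option ℚ) : 0 ≤ (pr u).2 := by
  rcases u with _ | r
  · simp [pr]
  · simp [pr]

lemma adj_iff (u v : Option ℚ) :
    fareyGraph.Adj u v ↔ |(pr u).1 * (pr v).2 - (pr v).1 * (pr u).2| = 1 := by
  rcases u with _ | x <;> rcases v with _ | y
  · simp [fareyGraph, fareyAdj, pr]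
  · show fareyAdj none (some y) ↔ _
    simp only [fareyAdj, pr]
    rw [mul_zero, sub_zero, one_mul, abs_of_nonneg (by positivity)]
    exact_mod_cast Iff.rfl
  · show fareyAdj (some x) none ↔ _
    simp only [fareyAdj, pr]
    rw [mul_zero, zero_sub, one_mul, abs_neg, abs_of_nonneg (by positivity)]
    exact_mod_cast Iff.rfl
  · exact Iff.rfl

lemma pr_eq {u v : Option ℚ} (h : pr u = pr v ∨ pr u = -pr v) : u = v := by
  rcases u with _ | r <;> rcases v with _ | s
  · rfl
  · exfalso
    have hd : (0:ℤ) < s.den := by exact_mod_cast s.pos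
    rcases h with h | h
    · have h2 : (0:ℤ) = (s.den : ℤ) := congrArg Prod.snd h
      omega
    · have h2 : (0:ℤ) = -(s.den : ℤ) := congrArg Prod.snd h
      omega
  · exfalso
    have hd : (0:ℤ) < r.den := by exact_mod_cast r.pos
    rcases h with h | h
    · have h2 : (r.den : ℤ) = 0 := congrArg Prod.snd h
      omega
    · have h2 : (r.den : ℤ) = -0 := congrArg Prod.snd h
      omega
  · have hr : (0:ℤ) < r.den := by exact_mod_cast r.pos
    have hs : (0:ℤ) < s.den := by exact_mod_cast s.pos
    rcases h with h | h
    · have h1 : r.num = s.num := congrArg Prod.fst h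
      have h2 : (r.den : ℤ) = (s.den : ℤ) := congrArg Prod.snd h
      exact congrArg some (Rat.ext h1 (by exact_mod_cast h2))
    · exfalso
      have h2 : (r.den : ℤ) = -(s.den : ℤ) := congrArg Prod.snd h
      omega

lemma solve {a b c d p q ε s t : ℤ} (hε2 : ε * ε = 1)
    (hε : a * d - c * b = ε) (hs : p * b - a * q = s) (ht : p * d - c * q = t) :
    p = ε * t * a - ε * s * c ∧ q = ε * t * b - ε * s * d := by
  constructor
  · linear_combination (ε * a) * ht - (ε * c) * hs - (ε * p) * hε - p * hε2
  · linear_combination (ε * b) * ht - (ε * d) * hs - (ε * q) * hε - q * hε2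

/-- Every common neighbour of adjacent `x, y` is `±pr x ± pr y`. -/
lemma common {x y z : Option ℚ} (hxy : fareyGraph.Adj x y)
    (hzx : fareyGraph.Adj z x) (hzy : fareyGraph.Adj z y) :
    ∃ u v : ℤ, (u = 1 ∨ u = -1) ∧ (v = 1 ∨ v = -1) ∧
      (pr z).1 = u * (pr x).1 + v * (pr y).1 ∧
      (pr z).2 = u * (pr x).2 + v * (pr y).2 := by
  rw [adj_iff] at hxy hzx hzy
  set a := (pr x).1; set b := (pr x).2; set c := (pr y).1; set d := (pr y).2
  set p := (pr z).1; set q := (pr z).2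
  have hε : a * d - c * b = 1 ∨ a * d - c * b = -1 := (abs_eq (by norm_num)).mp hxy
  have hs : p * b - a * q = 1 ∨ p * b - a * q = -1 := (abs_eq (by norm_num)).mp hzx
  have ht : p * d - c * q = 1 ∨ p * d - c * q = -1 := (abs_eq (by norm_num)).mp hzy
  have hε2 : (a * d - c * b) * (a * d - c * b) = 1 := by
    rcases hε with h | h <;> rw [h] <;> norm_num
  obtain ⟨hp, hq⟩ := solve (a := a) (b := b) (c := c) (d := d) (p := p) (q := q) hε2 rfl rfl rfl
  refine ⟨(a * d - c * b) * (p * d - c * q), -((a * d - c * b) * (p * b - a * q)),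
    ?_, ?_, ?_, ?_⟩
  · rcases hε with h | h <;> rcases ht with h' | h' <;> rw [h, h'] <;> norm_num
  · rcases hε with h | h <;> rcases hs with h' | h' <;> rw [h, h'] <;> norm_num
  · linear_combination hp
  · linear_combination hq

lemma eq_of_same_class {x y z z' : Option ℚ} {u v u' v' : ℤ}
    (hu : u = 1 ∨ u = -1) (hv : v = 1 ∨ v = -1)
    (hu' : u' = 1 ∨ u' = -1) (hv' : v' = 1 ∨ v' = -1)
    (h1 : (pr z).1 = u * (pr x).1 + v * (pr y).1)
    (h2 : (pr z).2 = u * (pr x).2 + v * (pr y).2)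
    (h1' : (pr z').1 = u' * (pr x).1 + v' * (pr y).1)
    (h2' : (pr z').2 = u' * (pr x).2 + v' * (pr y).2)
    (hcl : u * v = u' * v') : z = z' := by
  apply pr_eq
  have : ((pr z).1 = (pr z').1 ∧ (pr z).2 = (pr z').2) ∨
      ((pr z).1 = -(pr z').1 ∧ (pr z).2 = -(pr z').2) := by
    set A := (pr x).1; set B := (pr x).2; set C := (pr y).1; set D := (pr y).2
    set P := (pr z).1; set Q := (pr z).2; set P' := (pr z').1; set Q' := (pr z').2
    rcases hu with rfl | rfl <;> rcases hv with rfl | rfl <;>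
      rcases hu' with rfl | rfl <;> rcases hv' with rfl | rfl <;>
      simp only [one_mul, neg_one_mul] at h1 h2 h1' h2' hcl <;> omega
  rcases this with ⟨e1, e2⟩ | ⟨e1, e2⟩
  · exact Or.inl (Prod.ext e1 e2)
  · exact Or.inr (Prod.ext (by simpa using e1) (by simpa using e2))

lemma two_common {x y z z' : Option ℚ} (hxy : fareyGraph.Adj x y)
    (hzx : fareyGraph.Adj z x) (hzy : fareyGraph.Adj z y)
    (hz'x : fareyGraph.Adj z' x) (hz'y : fareyGraph.Adj z' y)
    (hne : z ≠ z') : ¬ fareyGraph.Adj z z' := by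
  intro hzz'
  obtain ⟨u, v, hu, hv, h1, h2⟩ := common hxy hzx hzy
  obtain ⟨u', v', hu', hv', h1', h2'⟩ := common hxy hz'x hz'y
  by_cases hcl : u * v = u' * v'
  · exact hne (eq_of_same_class hu hv hu' hv' h1 h2 h1' h2' hcl)
  have key : (pr z).1 * (pr z').2 - (pr z').1 * (pr z).2 =
      (u * v' - u' * v) * ((pr x).1 * (pr y).2 - (pr y).1 * (pr x).2) := by
    rw [h1, h2, h1', h2']; ring
  rw [adj_iff] at hxy hzz'
  rw [key, abs_mul, hxy, mul_one] at hzz'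
  rcases hu with rfl | rfl <;> rcases hv with rfl | rfl <;>
    rcases hu' with rfl | rfl <;> rcases hv' with rfl | rfl <;>
    (revert hcl hzz'; norm_num)


lemma three_common {x y z₁ z₂ z₃ : Option ℚ} (hxy : fareyGraph.Adj x y)
    (h1x : fareyGraph.Adj z₁ x) (h1y : fareyGraph.Adj z₁ y)
    (h2x : fareyGraph.Adj z₂ x) (h2y : fareyGraph.Adj z₂ y)
    (h3x : fareyGraph.Adj z₃ x) (h3y : fareyGraph.Adj z₃ y)
    (h12 : z₁ ≠ z₂) (h13 : z₁ ≠ z₃) (h23 : z₂ ≠ z₃) : False := by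
  obtain ⟨u₁, v₁, hu₁, hv₁, a₁, b₁⟩ := common hxy h1x h1y
  obtain ⟨u₂, v₂, hu₂, hv₂, a₂, b₂⟩ := common hxy h2x h2y
  obtain ⟨u₃, v₃, hu₃, hv₃, a₃, b₃⟩ := common hxy h3x h3y
  have : u₁ * v₁ = u₂ * v₂ ∨ u₁ * v₁ = u₃ * v₃ ∨ u₂ * v₂ = u₃ * v₃ := by
    rcases hu₁ with rfl | rfl <;> rcases hv₁ with rfl | rfl <;>
      rcases hu₂ with rfl | rfl <;> rcases hv₂ with rfl | rfl <;>
      rcases hu₃ with rfl | rfl <;> rcases hv₃ with rfl | rfl <;> norm_num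
  rcases this with h | h | h
  · exact h12 (eq_of_same_class hu₁ hv₁ hu₂ hv₂ a₁ b₁ a₂ b₂ h)
  · exact h13 (eq_of_same_class hu₁ hv₁ hu₃ hv₃ a₁ b₁ a₃ b₃ h)
  · exact h23 (eq_of_same_class hu₂ hv₂ hu₃ hv₃ a₂ b₂ a₃ b₃ h)

end FareyAux


/-- The Farey dual graph `𝔽*`: vertices are the triangles of the Farey graph, two
triangles being adjacent iff they are distinct and share exactly two vertices. -/
def fareyDual : SimpleGraph FareyTriangle where
  Adj T T' := T ≠ T' ∧ (T.1 ∩ T'.1).card = 2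
  symm := by
    constructor
    rintro T T' ⟨h1, h2⟩
    exact ⟨h1.symm, by rwa [Finset.inter_comm]⟩
  loopless := ⟨fun T h => h.1 rfl⟩

/-- Vertices of the model graph: Farey vertices `.inl x`, dual vertices
`.inr (.inl x)` (written `x̃`), and triangle-vertices `.inr (.inr T)`. -/
abbrev ModelVertex : Type := Option ℚ ⊕ (Option ℚ ⊕ FareyTriangle)

/-- Adjacency relation of the model graph `G`. -/
def modelAdj : ModelVertex → ModelVertex → Prop
  | .inl x, .inl y => fareyGraph.Adj x y
  | .inl x, .inr (.inl y) => x = y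
  | .inr (.inl x), .inl y => x = y
  | .inr (.inl x), .inr (.inr T) => x ∈ T.1
  | .inr (.inr T), .inr (.inl x) => x ∈ T.1
  | .inr (.inr T), .inr (.inr T') => T ≠ T' ∧ (T.1 ∩ T'.1).card = 2
  | _, _ => False

/-- The model graph `G` of the pants graph of `N₃`: on `V(𝔽) ⊔ V(𝔽) ⊔ T(𝔽)`, with
edges `x—y` for `x, y` adjacent in `𝔽`, `x̃—x`, `x̃—T` whenever `x ∈ T`, and `T—T'`
whenever `T ≠ T'` and `|T ∩ T'| = 2`. -/
def modelGraph : SimpleGraph ModelVertex where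
  Adj := modelAdj
  symm := by
    constructor
    rintro (x | x | T) (y | y | T') h
    · exact fareyGraph.adj_symm h
    · exact h.symm
    · exact h.elim
    · exact h.symm
    · exact h.elim
    · exact h
    · exact h.elim
    · exact h
    · exact ⟨h.1.symm, by
        have := h.2
        rwa [Finset.inter_comm]⟩
  loopless := by
    constructor
    rintro (x | x | T) h
    · exact fareyGraph.irrefl h
    · exact h.elim
    · exact h.1 rfl


namespace FareyAux

lemma clique_adj (T : FareyTriangle) {a b : Option ℚ} (ha : a ∈ T.1) (hb : b ∈ T.1)
    (hab : a ≠ b) : fareyGraph.Adj a b := T.2.1 ha hb hab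

lemma no_third (T T' S : FareyTriangle) (hTT' : T ≠ T')
    (hcard : (T.1 ∩ T'.1).card = 2)
    (hST : S ≠ T) (hST' : S ≠ T')
    (h1 : (S.1 ∩ T.1).card = 2) (h2 : (S.1 ∩ T'.1).card = 2) : False := by
  obtain ⟨x, y, hxy, hXeq⟩ := Finset.card_eq_two.mp hcard
  have hTX : T.1 ∩ T'.1 ⊆ T.1 := Finset.inter_subset_left
  have hTX' : T.1 ∩ T'.1 ⊆ T'.1 := Finset.inter_subset_right
  have hxX : x ∈ T.1 ∩ T'.1 := by rw [hXeq]; simp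
  have hyX : y ∈ T.1 ∩ T'.1 := by rw [hXeq]; simp
  have hxT : x ∈ T.1 := hTX hxX
  have hyT : y ∈ T.1 := hTX hyX
  have hxT' : x ∈ T'.1 := hTX' hxX
  have hyT' : y ∈ T'.1 := hTX' hyX
  -- third vertex of T
  have hsd : (T.1 \ (T.1 ∩ T'.1)).card = 1 := by
    rw [Finset.card_sdiff_of_subset hTX, T.2.2, hcard]
  obtain ⟨z, hz⟩ := Finset.card_eq_one.mp hsd
  have hzmem : z ∈ T.1 \ (T.1 ∩ T'.1) := hz ▸ Finset.mem_singleton_self z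
  have hzT : z ∈ T.1 := (Finset.mem_sdiff.mp hzmem).1
  have hzX : z ∉ T.1 ∩ T'.1 := (Finset.mem_sdiff.mp hzmem).2
  have hT : T.1 = {x, y, z} := by
    have hu := Finset.union_sdiff_of_subset hTX
    rw [hz, hXeq] at hu
    rw [← hu]; ext a; simp [or_assoc]
  -- third vertex of T'
  have hsd' : (T'.1 \ (T.1 ∩ T'.1)).card = 1 := by
    rw [Finset.card_sdiff_of_subset hTX', T'.2.2, hcard]
  obtain ⟨z', hz'⟩ := Finset.card_eq_one.mp hsd'
  have hzmem' : z' ∈ T'.1 \ (T.1 ∩ T'.1) := hz' ▸ Finset.mem_singleton_self z'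
  have hzT' : z' ∈ T'.1 := (Finset.mem_sdiff.mp hzmem').1
  have hzX' : z' ∉ T.1 ∩ T'.1 := (Finset.mem_sdiff.mp hzmem').2
  have hT' : T'.1 = {x, y, z'} := by
    have hu := Finset.union_sdiff_of_subset hTX'
    rw [hz', hXeq] at hu
    rw [← hu]; ext a; simp [or_assoc]
  -- distinctness
  have hzx : z ≠ x := fun h => hzX (h ▸ hxX)
  have hzy : z ≠ y := fun h => hzX (h ▸ hyX)
  have hz'x : z' ≠ x := fun h => hzX' (h ▸ hxX)
  have hz'y : z' ≠ y := fun h => hzX' (h ▸ hyX)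
  have hznT' : z ∉ T'.1 := fun h => hzX (Finset.mem_inter.mpr ⟨hzT, h⟩)
  have hz'nT : z' ∉ T.1 := fun h => hzX' (Finset.mem_inter.mpr ⟨h, hzT'⟩)
  have hzz' : z ≠ z' := fun h => hznT' (h ▸ hzT')
  -- adjacencies
  have hxyA : fareyGraph.Adj x y := clique_adj T hxT hyT hxy
  have hzxA : fareyGraph.Adj z x := clique_adj T hzT hxT hzx
  have hzyA : fareyGraph.Adj z y := clique_adj T hzT hyT hzy
  have hz'xA : fareyGraph.Adj z' x := clique_adj T' hzT' hxT' hz'x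
  have hz'yA : fareyGraph.Adj z' y := clique_adj T' hzT' hyT' hz'y
  -- S meets T ∩ T'
  have hmeet : 0 < (S.1 ∩ (T.1 ∩ T'.1)).card := by
    have hU : (S.1 ∩ T.1) ∪ (S.1 ∩ T'.1) ⊆ S.1 :=
      Finset.union_subset Finset.inter_subset_left Finset.inter_subset_left
    have hUc : ((S.1 ∩ T.1) ∪ (S.1 ∩ T'.1)).card ≤ 3 :=
      le_trans (Finset.card_le_card hU) (le_of_eq S.2.2)
    have hI : (S.1 ∩ T.1) ∩ (S.1 ∩ T'.1) = S.1 ∩ (T.1 ∩ T'.1) := by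
      ext a; simp only [Finset.mem_inter]; tauto
    have hcu := Finset.card_inter_add_card_union (S.1 ∩ T.1) (S.1 ∩ T'.1)
    rw [hI, h1, h2] at hcu
    omega
  obtain ⟨x0, hx0⟩ := Finset.card_pos.mp hmeet
  have hx0S : x0 ∈ S.1 := (Finset.mem_inter.mp hx0).1
  have hx0xy : x0 = x ∨ x0 = y := by
    have := (Finset.mem_inter.mp hx0).2
    rw [hXeq] at this
    simpa using this
  by_cases hxS : x ∈ S.1 <;> by_cases hyS : y ∈ S.1
  · -- both x and y in S
    have hpair : ({x, y} : Finset (Option ℚ)) ⊆ S.1 := by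
      intro a ha
      rcases Finset.mem_insert.mp ha with rfl | ha
      · exact hxS
      · exact (Finset.mem_singleton.mp ha) ▸ hyS
    have hsd'' : (S.1 \ {x, y}).card = 1 := by
      rw [Finset.card_sdiff_of_subset hpair, S.2.2, Finset.card_pair hxy]
    obtain ⟨w, hw⟩ := Finset.card_eq_one.mp hsd''
    have hwmem : w ∈ S.1 \ {x, y} := hw ▸ Finset.mem_singleton_self w
    have hwS : w ∈ S.1 := (Finset.mem_sdiff.mp hwmem).1
    have hwxy : w ∉ ({x, y} : Finset (Option ℚ)) := (Finset.mem_sdiff.mp hwmem).2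
    have hwx : w ≠ x := fun h => hwxy (by rw [h]; simp)
    have hwy : w ≠ y := fun h => hwxy (by rw [h]; simp)
    have hS : S.1 = {x, y, w} := by
      have hu := Finset.union_sdiff_of_subset hpair
      rw [hw] at hu
      rw [← hu]; ext a; simp [or_assoc]
    have hwz : w ≠ z := by
      rintro rfl
      exact hST (Subtype.ext (by rw [hS, hT]))
    have hwz' : w ≠ z' := by
      rintro rfl
      exact hST' (Subtype.ext (by rw [hS, hT']))
    have hwxA : fareyGraph.Adj w x := clique_adj S hwS hxS hwx
    have hwyA : fareyGraph.Adj w y := clique_adj S hwS hyS hwy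
    exact three_common hxyA hzxA hzyA hz'xA hz'yA hwxA hwyA hzz'
      (Ne.symm hwz) (Ne.symm hwz')
  · -- x ∈ S, y ∉ S
    have hsub : S.1 ∩ T.1 ⊆ {x, z} := by
      intro a ha
      have haS := (Finset.mem_inter.mp ha).1
      have haT := (Finset.mem_inter.mp ha).2
      rw [hT] at haT
      simp only [Finset.mem_insert, Finset.mem_singleton] at haT ⊢
      rcases haT with rfl | rfl | rfl
      · exact Or.inl rfl
      · exact absurd haS hyS
      · exact Or.inr rfl
    have heq : S.1 ∩ T.1 = {x, z} := Finset.eq_of_subset_of_card_le hsub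
      (by rw [h1, Finset.card_pair (Ne.symm hzx)])
    have hzS : z ∈ S.1 := by
      have : z ∈ S.1 ∩ T.1 := by rw [heq]; simp
      exact (Finset.mem_inter.mp this).1
    have hsub' : S.1 ∩ T'.1 ⊆ {x, z'} := by
      intro a ha
      have haS := (Finset.mem_inter.mp ha).1
      have haT := (Finset.mem_inter.mp ha).2
      rw [hT'] at haT
      simp only [Finset.mem_insert, Finset.mem_singleton] at haT ⊢
      rcases haT with rfl | rfl | rfl
      · exact Or.inl rfl
      · exact absurd haS hyS
      · exact Or.inr rfl
    have heq' : S.1 ∩ T'.1 = {x, z'} := Finset.eq_of_subset_of_card_le hsub'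
      (by rw [h2, Finset.card_pair (Ne.symm hz'x)])
    have hz'S : z' ∈ S.1 := by
      have : z' ∈ S.1 ∩ T'.1 := by rw [heq']; simp
      exact (Finset.mem_inter.mp this).1
    exact two_common hxyA hzxA hzyA hz'xA hz'yA hzz' (clique_adj S hzS hz'S hzz')
  · -- y ∈ S, x ∉ S
    have hsub : S.1 ∩ T.1 ⊆ {y, z} := by
      intro a ha
      have haS := (Finset.mem_inter.mp ha).1
      have haT := (Finset.mem_inter.mp ha).2
      rw [hT] at haT
      simp only [Finset.mem_insert, Finset.mem_singleton] at haT ⊢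
      rcases haT with rfl | rfl | rfl
      · exact absurd haS hxS
      · exact Or.inl rfl
      · exact Or.inr rfl
    have heq : S.1 ∩ T.1 = {y, z} := Finset.eq_of_subset_of_card_le hsub
      (by rw [h1, Finset.card_pair (Ne.symm hzy)])
    have hzS : z ∈ S.1 := by
      have : z ∈ S.1 ∩ T.1 := by rw [heq]; simp
      exact (Finset.mem_inter.mp this).1
    have hsub' : S.1 ∩ T'.1 ⊆ {y, z'} := by
      intro a ha
      have haS := (Finset.mem_inter.mp ha).1
      have haT := (Finset.mem_inter.mp ha).2
      rw [hT'] at haT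
      simp only [Finset.mem_insert, Finset.mem_singleton] at haT ⊢
      rcases haT with rfl | rfl | rfl
      · exact absurd haS hxS
      · exact Or.inl rfl
      · exact Or.inr rfl
    have heq' : S.1 ∩ T'.1 = {y, z'} := Finset.eq_of_subset_of_card_le hsub'
      (by rw [h2, Finset.card_pair (Ne.symm hz'y)])
    have hz'S : z' ∈ S.1 := by
      have : z' ∈ S.1 ∩ T'.1 := by rw [heq']; simp
      exact (Finset.mem_inter.mp this).1
    exact two_common hxyA hzxA hzyA hz'xA hz'yA hzz' (clique_adj S hzS hz'S hzz')
  · rcases hx0xy with rfl | rfl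
    · exact hxS hx0S
    · exact hyS hx0S

end FareyAux

/-- In the model graph `G`, every edge joining two triangle-vertices `T` and `T'`
is contained in exactly two triangles of `G`: the common neighbours of `T` and `T'`
are exactly the dual vertices `x̃` with `x ∈ T ∩ T'` (and there are two of them,
since `T ∩ T'` consists of exactly two vertices). -/
theorem modelGraph_triangle_triangle_edge_common_neighbours
    (T T' : FareyTriangle)
    (h : modelGraph.Adj (.inr (.inr T)) (.inr (.inr T'))) :
    {w : ModelVertex | modelGraph.Adj (.inr (.inr T)) w ∧
        modelGraph.Adj (.inr (.inr T')) w} =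
      (fun x => (Sum.inr (Sum.inl x) : ModelVertex)) '' ↑(T.1 ∩ T'.1) ∧
    {w : ModelVertex | modelGraph.Adj (.inr (.inr T)) w ∧
        modelGraph.Adj (.inr (.inr T')) w}.ncard = 2 := by
  have h' : T ≠ T' ∧ (T.1 ∩ T'.1).card = 2 := h
  obtain ⟨hTT', hcard⟩ := h'
  have hset : {w : ModelVertex | modelGraph.Adj (.inr (.inr T)) w ∧
      modelGraph.Adj (.inr (.inr T')) w} =
      (fun x => (Sum.inr (Sum.inl x) : ModelVertex)) '' ↑(T.1 ∩ T'.1) := by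
    ext w
    constructor
    · rintro ⟨h1, h2⟩
      rcases w with a | a | S
      · exact (h1 : False).elim
      · have ha1 : a ∈ T.1 := h1
        have ha2 : a ∈ T'.1 := h2
        exact ⟨a, Finset.mem_coe.mpr (Finset.mem_inter.mpr ⟨ha1, ha2⟩), rfl⟩
      · have h1' : T ≠ S ∧ (T.1 ∩ S.1).card = 2 := h1
        have h2' : T' ≠ S ∧ (T'.1 ∩ S.1).card = 2 := h2
        exact (FareyAux.no_third T T' S hTT' hcard (Ne.symm h1'.1) (Ne.symm h2'.1)
          (by rw [Finset.inter_comm]; exact h1'.2)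
          (by rw [Finset.inter_comm]; exact h2'.2)).elim
    · rintro ⟨a, ha, rfl⟩
      have ha' := Finset.mem_inter.mp (Finset.mem_coe.mp ha)
      exact ⟨ha'.1, ha'.2⟩
  refine ⟨hset, ?_⟩
  rw [hset, Set.ncard_image_of_injective _ (fun a b hab => by simpa using hab),
    Set.ncard_coe_finset, hcard]
end

section
/- Every graph automorphism of the model graph G preserves its three classes of vertices: it maps Farey vertices to Farey vertices, dual vertices to dual vertices, and triangle-vertices to triangle-vertices. -/
section Aux

open SimpleGraph

lemma copr {r : ℤ} {s : ℕ} (u v : ℤ) (h : u * r + v * s = 1 ∨ u * r + v * s = -1) :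
    r.natAbs.Coprime s := by
  have hc : IsCoprime r (s : ℤ) := by
    rcases h with h | h
    · exact ⟨u, v, by linarith⟩
    · exact ⟨-u, -v, by linarith⟩
  have hg : Int.gcd r (s : ℤ) = 1 := Int.isCoprime_iff_gcd_eq_one.mp hc
  simpa [Int.gcd] using hg

lemma rat_ne_of_den_ne {u v : ℚ} (h : u.den ≠ v.den) : u ≠ v :=
  fun he => h (by rw [he])

lemma rat_ne_of_num_ne {u v : ℚ} (h : u.num ≠ v.num) : u ≠ v :=
  fun he => h (by rw [he])

lemma adj_ss {x y : ℚ} (h : |x.num * (y.den : ℤ) - y.num * (x.den : ℤ)| = 1) :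
    fareyAdj (some x) (some y) := h

lemma two_commons {x y : Option ℚ} (h : fareyAdj x y) :
    ∃ z w : Option ℚ, z ≠ w ∧ fareyAdj x z ∧ fareyAdj y z ∧ fareyAdj x w ∧ fareyAdj y w := by
  match x, y with
  | none, none => exact h.elim
  | none, some b =>
    have hb : b.den = 1 := h
    refine ⟨some (Rat.mk' (b.num + 1) 1 one_ne_zero (Nat.coprime_one_right _)),
      some (Rat.mk' (b.num - 1) 1 one_ne_zero (Nat.coprime_one_right _)), ?_, rfl, ?_, rfl, ?_⟩
    · exact fun he => by
        have := Option.some_injective _ he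
        exact absurd (congrArg Rat.num this) (by simp; omega)
    · show |b.num * ((1:ℕ) : ℤ) - (b.num + 1) * (b.den : ℤ)| = 1
      rw [hb]; push_cast; ring_nf; simp
    · show |b.num * ((1:ℕ) : ℤ) - (b.num - 1) * (b.den : ℤ)| = 1
      rw [hb]; push_cast; ring_nf; simp
  | some a, none =>
    have ha : a.den = 1 := h
    refine ⟨some (Rat.mk' (a.num + 1) 1 one_ne_zero (Nat.coprime_one_right _)),
      some (Rat.mk' (a.num - 1) 1 one_ne_zero (Nat.coprime_one_right _)), ?_, ?_, rfl, ?_, rfl⟩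
    · exact fun he => by
        have := Option.some_injective _ he
        exact absurd (congrArg Rat.num this) (by simp; omega)
    · show |a.num * ((1:ℕ) : ℤ) - (a.num + 1) * (a.den : ℤ)| = 1
      rw [ha]; push_cast; ring_nf; simp
    · show |a.num * ((1:ℕ) : ℤ) - (a.num - 1) * (a.den : ℤ)| = 1
      rw [ha]; push_cast; ring_nf; simp
  | some a, some b =>
    have h' : a.num * (b.den : ℤ) - b.num * (a.den : ℤ) = 1 ∨
        a.num * (b.den : ℤ) - b.num * (a.den : ℤ) = -1 := by
      rcases abs_eq (by norm_num : (0:ℤ) ≤ 1) |>.mp h with h1 | h1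
      · exact Or.inl h1
      · exact Or.inr h1
    set p := a.num with hp
    set r := b.num with hr
    have hq1 : 1 ≤ a.den := a.pos
    have hs1 : 1 ≤ b.den := b.pos
    -- first common neighbor: mediant
    have hz : ((b.den : ℤ)) * (p + r) + (-r) * ((a.den + b.den : ℕ) : ℤ) = 1 ∨
        ((b.den : ℤ)) * (p + r) + (-r) * ((a.den + b.den : ℕ) : ℤ) = -1 := by
      push_cast
      rcases h' with h1 | h1
      · exact Or.inl (by linarith [h1])
      · exact Or.inr (by linarith [h1])
    set z : ℚ := Rat.mk' (p + r) (a.den + b.den) (by omega) (copr _ _ hz) with hzdef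
    have hxz : fareyAdj (some a) (some z) := by
      show |p * ((a.den + b.den : ℕ) : ℤ) - (p + r) * (a.den : ℤ)| = 1
      push_cast
      have : p * ((a.den : ℤ) + b.den) - (p + r) * a.den
          = p * (b.den : ℤ) - r * (a.den : ℤ) := by ring
      rw [this]; exact h
    have hyz : fareyAdj (some b) (some z) := by
      show |r * ((a.den + b.den : ℕ) : ℤ) - (p + r) * (b.den : ℤ)| = 1
      push_cast
      have : r * ((a.den : ℤ) + b.den) - (p + r) * b.den
          = -(p * (b.den : ℤ) - r * (a.den : ℤ)) := by ring
      rw [this, abs_neg]; exact h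
    rcases lt_trichotomy a.den b.den with hlt | heq | hgt
    · -- w = (r - p)/(s - q)
      have hw : (-(a.den : ℤ)) * (r - p) + p * ((b.den - a.den : ℕ) : ℤ) = 1 ∨
          (-(a.den : ℤ)) * (r - p) + p * ((b.den - a.den : ℕ) : ℤ) = -1 := by
        rw [Nat.cast_sub (le_of_lt hlt)]
        rcases h' with h1 | h1
        · exact Or.inl (by linarith)
        · exact Or.inr (by linarith)
      set w : ℚ := Rat.mk' (r - p) (b.den - a.den) (by omega) (copr _ _ hw) with hwdef
      refine ⟨some z, some w, ?_, hxz, hyz, ?_, ?_⟩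
      · intro he
        have := Option.some_injective _ he
        have hd := congrArg Rat.den this
        simp only [hzdef, hwdef] at hd
        omega
      · show |p * ((b.den - a.den : ℕ) : ℤ) - (r - p) * (a.den : ℤ)| = 1
        rw [Nat.cast_sub (le_of_lt hlt)]
        have : p * ((b.den : ℤ) - a.den) - (r - p) * a.den
            = p * (b.den : ℤ) - r * (a.den : ℤ) := by ring
        rw [this]; exact h
      · show |r * ((b.den - a.den : ℕ) : ℤ) - (r - p) * (b.den : ℤ)| = 1
        rw [Nat.cast_sub (le_of_lt hlt)]
        have : r * ((b.den : ℤ) - a.den) - (r - p) * b.den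
            = p * (b.den : ℤ) - r * (a.den : ℤ) := by ring
        rw [this]; exact h
    · -- equal dens: both are 1, w = none
      have hden1 : a.den = 1 ∧ b.den = 1 := by
        have : (a.den : ℤ) ∣ 1 := by
          rcases h' with h1 | h1
          · exact ⟨p - r, by rw [← heq] at h1; linarith [h1]; ⟩
          · exact ⟨r - p, by rw [← heq] at h1; linarith [h1]⟩
        have := Int.le_of_dvd one_pos this
        omega
      refine ⟨some z, none, by simp, hxz, hyz, hden1.1, hden1.2⟩
    · -- w = (p - r)/(q - s)
      have hw : ((b.den : ℤ)) * (p - r) + (-r) * ((a.den - b.den : ℕ) : ℤ) = 1 ∨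
          ((b.den : ℤ)) * (p - r) + (-r) * ((a.den - b.den : ℕ) : ℤ) = -1 := by
        rw [Nat.cast_sub (le_of_lt hgt)]
        rcases h' with h1 | h1
        · exact Or.inl (by linarith)
        · exact Or.inr (by linarith)
      set w : ℚ := Rat.mk' (p - r) (a.den - b.den) (by omega) (copr _ _ hw) with hwdef
      refine ⟨some z, some w, ?_, hxz, hyz, ?_, ?_⟩
      · intro he
        have := Option.some_injective _ he
        have hd := congrArg Rat.den this
        simp only [hzdef, hwdef] at hd
        omega
      · show |p * ((a.den - b.den : ℕ) : ℤ) - (p - r) * (a.den : ℤ)| = 1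
        rw [Nat.cast_sub (le_of_lt hgt)]
        have : p * ((a.den : ℤ) - b.den) - (p - r) * a.den
            = -(p * (b.den : ℤ) - r * (a.den : ℤ)) := by ring
        rw [this, abs_neg]; exact h
      · show |r * ((a.den - b.den : ℕ) : ℤ) - (p - r) * (b.den : ℤ)| = 1
        rw [Nat.cast_sub (le_of_lt hgt)]
        have : r * ((a.den : ℤ) - b.den) - (p - r) * b.den
            = -(p * (b.den : ℤ) - r * (a.den : ℤ)) := by ring
        rw [this, abs_neg]; exact h



lemma exists_neighbor (x : Option ℚ) : ∃ y, fareyAdj x y := by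
  match x with
  | none =>
    exact ⟨some (Rat.mk' 1 1 one_ne_zero (Nat.coprime_one_right _)), rfl⟩
  | some a =>
    have hcop : IsCoprime a.num (a.den : ℤ) := by
      rw [Int.isCoprime_iff_gcd_eq_one]
      simpa [Int.gcd] using a.reduced
    obtain ⟨u, v, huv⟩ := hcop
    set p := a.num
    set q := (a.den : ℤ) with hqdef
    have hq1 : (1 : ℤ) ≤ q := by
      have := a.pos; omega
    set k : ℤ := |u| + 1 with hk
    set s : ℤ := u + k * q with hs
    set r : ℤ := -v + k * p with hrr
    have hcombo : p * s - r * q = 1 := by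
      have : p * s - r * q = u * p + v * q := by rw [hs, hrr]; ring
      rw [this]; exact huv
    have hspos : 1 ≤ s := by
      have h1 : (|u| + 1) * 1 ≤ (|u| + 1) * q := by
        apply mul_le_mul_of_nonneg_left hq1
        positivity
      have := neg_abs_le u
      simp only [hs, hk]
      linarith
    have hcast : ((s.toNat : ℕ) : ℤ) = s := Int.toNat_of_nonneg (by omega)
    have hco : r.natAbs.Coprime s.toNat := by
      apply copr (-q) p
      rw [hcast]
      exact Or.inl (by linarith [hcombo])
    refine ⟨some (Rat.mk' r s.toNat (by omega) hco), ?_⟩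
    show |p * ((s.toNat : ℕ) : ℤ) - r * q| = 1
    rw [hcast, hcombo]
    simp

lemma fadj_ne {x y : Option ℚ} (h : fareyAdj x y) : x ≠ y :=
  (fareyGraph.ne_of_adj h)

lemma fadj_symm {x y : Option ℚ} (h : fareyAdj x y) : fareyAdj y x :=
  (fareyGraph.adj_symm h)

lemma mem_triangle (x : Option ℚ) : ∃ T : FareyTriangle, x ∈ T.1 := by
  obtain ⟨a, ha⟩ := exists_neighbor x
  obtain ⟨z, w, hzw, hxz, haz, hxw, haw⟩ := two_commons ha
  refine ⟨⟨{x, a, z}, SimpleGraph.is3Clique_triple_iff.mpr ⟨ha, hxz, haz⟩⟩, ?_⟩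
  simp

lemma triangle_decomp (T : FareyTriangle) {x : Option ℚ} (hx : x ∈ T.1) :
    ∃ b c, x ≠ b ∧ x ≠ c ∧ b ≠ c ∧ T.1 = {x, b, c} := by
  have h3 : T.1.card = 3 := T.2.card_eq
  have h2 : (T.1.erase x).card = 2 := by
    rw [Finset.card_erase_of_mem hx, h3]
  obtain ⟨b, c, hbc, hs⟩ := Finset.card_eq_two.mp h2
  have hxb : x ≠ b := fun he => by
    have : b ∈ T.1.erase x := by rw [hs]; simp
    exact (Finset.notMem_erase x T.1) (he ▸ this)
  have hxc : x ≠ c := fun he => by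
    have : c ∈ T.1.erase x := by rw [hs]; simp
    exact (Finset.notMem_erase x T.1) (he ▸ this)
  refine ⟨b, c, hxb, hxc, hbc, ?_⟩
  rw [← Finset.insert_erase hx, hs]

lemma exists_adj_triangle (T : FareyTriangle) {x : Option ℚ} (hx : x ∈ T.1) :
    ∃ T' : FareyTriangle, x ∈ T'.1 ∧ T ≠ T' ∧ (T.1 ∩ T'.1).card = 2 := by
  obtain ⟨b, c, hxb, hxc, hbc, hT⟩ := triangle_decomp T hx
  have hmb : b ∈ T.1 := by rw [hT]; simp
  have hmc : c ∈ T.1 := by rw [hT]; simp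
  have hadjxb : fareyAdj x b := T.2.1 hx hmb hxb
  obtain ⟨z, w, hzw, hxz, hbz, hxw, hbw⟩ := two_commons hadjxb
  -- pick d ∈ {z, w} with d ≠ c
  obtain ⟨d, hd, hxd, hbd⟩ : ∃ d, d ≠ c ∧ fareyAdj x d ∧ fareyAdj b d := by
    by_cases hzc : z = c
    · exact ⟨w, fun hwc => hzw (hzc.trans hwc.symm), hxw, hbw⟩
    · exact ⟨z, hzc, hxz, hbz⟩
  have hdx : x ≠ d := fadj_ne hxd
  have hdb : b ≠ d := fadj_ne hbd
  refine ⟨⟨{x, b, d}, SimpleGraph.is3Clique_triple_iff.mpr ⟨hadjxb, hxd, hbd⟩⟩, by simp, ?_, ?_⟩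
  · intro he
    have hT' : ({x, b, d} : Finset (Option ℚ)) = T.1 := by rw [he]
    have : c ∈ ({x, b, d} : Finset (Option ℚ)) := by rw [hT', hT]; simp
    simp only [Finset.mem_insert, Finset.mem_singleton] at this
    rcases this with h | h | h
    · exact hxc h.symm
    · exact hbc h.symm
    · exact hd h.symm
  · have : T.1 ∩ ({x, b, d} : Finset (Option ℚ)) = {x, b} := by
      rw [hT]
      ext e
      simp only [Finset.mem_inter, Finset.mem_insert, Finset.mem_singleton]
      constructor
      · rintro ⟨h1 | h1 | h1, h2 | h2 | h2⟩ <;> subst_vars <;> tauto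
      · rintro (h | h) <;> subst_vars <;> tauto
    rw [this, Finset.card_pair hxb]

/-- An adjacent pair with no common neighbor. -/
def noCommon (u v : ModelVertex) : Prop :=
  modelGraph.Adj u v ∧ ∀ w, ¬(modelGraph.Adj u w ∧ modelGraph.Adj v w)

/-- `v` is an endpoint of some common-neighbor-free edge. -/
def hasSp (v : ModelVertex) : Prop := ∃ u, noCommon v u

lemma sp_farey (x : Option ℚ) : noCommon (.inl x) (.inr (.inl x)) := by
  refine ⟨rfl, ?_⟩
  rintro (y | y | T) ⟨h1, h2⟩
  · exact (fareyGraph.ne_of_adj h1).symm (h2 : x = y).symm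
  · exact (h2 : False)
  · exact (h1 : False)

lemma sp_dual (x : Option ℚ) : noCommon (.inr (.inl x)) (.inl x) :=
  ⟨rfl, fun w hw => (sp_farey x).2 w ⟨hw.2, hw.1⟩⟩

lemma hasSp_farey (x : Option ℚ) : hasSp (.inl x) := ⟨_, sp_farey x⟩
lemma hasSp_dual (x : Option ℚ) : hasSp (.inr (.inl x)) := ⟨_, sp_dual x⟩

lemma not_hasSp_tri (T : FareyTriangle) : ¬ hasSp (.inr (.inr T)) := by
  rintro ⟨(y | a | T'), hadj, hno⟩
  · exact (hadj : False)
  · have ha : a ∈ T.1 := hadj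
    obtain ⟨T', hmem, hne, hcard⟩ := exists_adj_triangle T ha
    exact hno (.inr (.inr T')) ⟨⟨hne, hcard⟩, hmem⟩
  · obtain ⟨hne, hcard⟩ := (hadj : T ≠ T' ∧ (T.1 ∩ T'.1).card = 2)
    have : (T.1 ∩ T'.1).Nonempty := Finset.card_pos.mp (by omega)
    obtain ⟨a, hmem⟩ := this
    rw [Finset.mem_inter] at hmem
    exact hno (.inr (.inl a)) ⟨hmem.1, hmem.2⟩

lemma dual_bad_neighbor (x : Option ℚ) :
    ∃ w, modelGraph.Adj (.inr (.inl x)) w ∧ ¬ hasSp w := by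
  obtain ⟨T, hT⟩ := mem_triangle x
  exact ⟨.inr (.inr T), hT, not_hasSp_tri T⟩

lemma farey_neighbors_sp (x : Option ℚ) :
    ∀ w, modelGraph.Adj (.inl x) w → hasSp w := by
  rintro (y | y | T) h
  · exact hasSp_farey y
  · exact hasSp_dual y
  · exact (h : False).elim

lemma noCommon_map (f : modelGraph ≃g modelGraph) (u v : ModelVertex) :
    noCommon (f u) (f v) ↔ noCommon u v := by
  constructor
  · rintro ⟨h1, h2⟩
    refine ⟨f.map_adj_iff.mp h1, fun w hw => h2 (f w) ⟨f.map_adj_iff.mpr hw.1, f.map_adj_iff.mpr hw.2⟩⟩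
  · rintro ⟨h1, h2⟩
    refine ⟨f.map_adj_iff.mpr h1, fun w hw => h2 (f.symm w) ⟨?_, ?_⟩⟩
    · have := hw.1; rw [← f.apply_symm_apply w] at this; exact f.map_adj_iff.mp this
    · have := hw.2; rw [← f.apply_symm_apply w] at this; exact f.map_adj_iff.mp this

lemma hasSp_map (f : modelGraph ≃g modelGraph) (v : ModelVertex) :
    hasSp (f v) ↔ hasSp v := by
  constructor
  · rintro ⟨u, hu⟩
    refine ⟨f.symm u, (noCommon_map f v (f.symm u)).mp ?_⟩
    rwa [f.apply_symm_apply]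
  · rintro ⟨u, hu⟩
    exact ⟨f u, (noCommon_map f v u).mpr hu⟩
end Aux

/-- Every graph automorphism of the model graph `G` preserves its three classes of
vertices: Farey vertices go to Farey vertices, dual vertices to dual vertices, and
triangle-vertices to triangle-vertices. -/
theorem modelGraph_aut_preserves_vertex_classes (f : modelGraph ≃g modelGraph) :
    (∀ x : Option ℚ, ∃ y : Option ℚ, f (.inl x) = .inl y) ∧
    (∀ x : Option ℚ, ∃ y : Option ℚ, f (.inr (.inl x)) = .inr (.inl y)) ∧
    (∀ T : FareyTriangle, ∃ T' : FareyTriangle,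
      f (.inr (.inr T)) = .inr (.inr T')) := by
  have hnbr : ∀ v : ModelVertex, (∀ w, modelGraph.Adj v w → hasSp w) →
      ∀ w, modelGraph.Adj (f v) w → hasSp w := by
    intro v hv w hw
    have h1 : modelGraph.Adj (f v) (f (f.symm w)) := by rwa [f.apply_symm_apply]
    have h2 : modelGraph.Adj v (f.symm w) := f.map_adj_iff.mp h1
    have := hv _ h2
    rw [← hasSp_map f (f.symm w)] at this
    rwa [f.apply_symm_apply] at this
  refine ⟨?_, ?_, ?_⟩
  · intro x
    rcases hfx : f (.inl x) with y | y | T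
    · exact ⟨y, rfl⟩
    · -- f (inl x) is a dual vertex: contradiction, it has a bad neighbor
      exfalso
      obtain ⟨w, hadj, hbad⟩ := dual_bad_neighbor y
      exact hbad (hnbr (.inl x) (farey_neighbors_sp x) w (by rwa [hfx]))
    · -- triangle vertex: contradiction with hasSp
      exfalso
      have := (hasSp_map f (.inl x)).mpr (hasSp_farey x)
      rw [hfx] at this
      exact not_hasSp_tri T this
  · intro x
    rcases hfx : f (.inr (.inl x)) with y | y | T
    · exfalso
      obtain ⟨w, hadj, hbad⟩ := dual_bad_neighbor x
      have hadj' : modelGraph.Adj (f (.inr (.inl x))) (f w) := f.map_adj_iff.mpr hadj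
      rw [hfx] at hadj'
      exact hbad ((hasSp_map f w).mp (farey_neighbors_sp y (f w) hadj'))
    · exact ⟨y, rfl⟩
    · exfalso
      have := (hasSp_map f (.inr (.inl x))).mpr (hasSp_dual x)
      rw [hfx] at this
      exact not_hasSp_tri T this
  · intro T
    rcases hfT : f (.inr (.inr T)) with y | y | T'
    · exfalso
      have := not_hasSp_tri T
      rw [← hasSp_map f (.inr (.inr T)), hfT] at this
      exact this (hasSp_farey y)
    · exfalso
      have := not_hasSp_tri T
      rw [← hasSp_map f (.inr (.inr T)), hfT] at this
      exact this (hasSp_dual y)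
    · exact ⟨T', rfl⟩
end

section
/- For every vertex x of the Farey graph 𝔽, the subgraph of the model graph G induced on the set {x̃} ∪ {T : T is a triangle of 𝔽 with x ∈ T} is isomorphic to the infinite fan graph F∞, via an isomorphism taking x̃ to the centre of F∞. -/
/-- Adjacency relation of the infinite fan graph on `Option ℤ`. -/
def fanAdj : Option ℤ → Option ℤ → Prop
  | some i, some j => |i - j| = 1
  | some _, none => True
  | none, some _ => True
  | none, none => False

/-- The infinite fan graph `F∞`: the centre `none` is adjacent to every `some i`,
and `some i` is adjacent to `some j` iff `|i - j| = 1`. -/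
def fanGraph : SimpleGraph (Option ℤ) where
  Adj := fanAdj
  symm := by
    constructor
    rintro (_ | i) (_ | j) h
    · exact h.elim
    · trivial
    · trivial
    · show |j - i| = 1
      rw [abs_sub_comm]
      exact h
  loopless := by
    constructor
    rintro (_ | i) h
    · exact h.elim
    · have : |i - i| = 1 := h
      simp at this

namespace FanAux

def num' : Option ℚ → ℤ
  | none => 1
  | some r => r.num

def den' : Option ℚ → ℤ
  | none => 0
  | some r => (r.den : ℤ)

lemma den'_nonneg (u : Option ℚ) : 0 ≤ den' u := by
  cases u <;> simp [den']

lemma den'_eq_zero {u : Option ℚ} (h : den' u = 0) : u = none := by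
  cases u with
  | none => rfl
  | some r => exact absurd h (by simp [den', r.den_nz])

lemma farey_adj_iff (u v : Option ℚ) :
    fareyGraph.Adj u v ↔ |num' u * den' v - num' v * den' u| = 1 := by
  cases u with
  | none =>
      cases v with
      | none => simp [fareyGraph, fareyAdj, num', den']
      | some r =>
          show r.den = 1 ↔ _
          rw [show num' (none : Option ℚ) * den' (some r) - num' (some r) * den' (none : Option ℚ)
              = (r.den : ℤ) by simp [num', den']]
          rw [abs_of_nonneg (by positivity)]
          omega
  | some r =>
      cases v with
      | none =>
          show r.den = 1 ↔ _
          rw [show num' (some r) * den' (none : Option ℚ) - num' (none : Option ℚ) * den' (some r)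
              = -(r.den : ℤ) by simp [num', den']]
          rw [abs_neg, abs_of_nonneg (by positivity)]
          omega
      | some s => exact Iff.rfl

lemma coprime_x (x : Option ℚ) : Int.gcd (num' x) (den' x) = 1 := by
  cases x with
  | none => simp [num', den']
  | some r =>
      have := r.reduced
      simpa [num', den', Int.gcd] using this

def mk' (A B : ℤ) : Option ℚ := if B = 0 then none else some ((A : ℚ) / B)

lemma mk'_self (z : Option ℚ) : mk' (num' z) (den' z) = z := by
  cases z with
  | none => simp [mk', num', den']
  | some r =>
      simp [mk', num', den', r.den_nz, Rat.num_div_den]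


lemma mk'_neg (A B : ℤ) : mk' (-A) (-B) = mk' A B := by
  unfold mk'
  by_cases h : B = 0
  · simp [h]
  · simp only [neg_eq_zero, h, if_neg]
    push_cast
    rw [neg_div_neg_eq]

lemma mk'_spec (A B : ℤ) (h : Int.gcd A B = 1) :
    ∃ σ : ℤ, (σ = 1 ∨ σ = -1) ∧ num' (mk' A B) = σ * A ∧ den' (mk' A B) = σ * B := by
  by_cases hB : B = 0
  · subst hB
    refine ⟨A, ?_, ?_, by simp [mk', num', den']⟩
    · have h' : A.natAbs = 1 := by simpa using h
      omega
    · have : A = 1 ∨ A = -1 := by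
        have h' : A.natAbs = 1 := by simpa using h
        omega
      simp [mk', num']
      rcases this with rfl | rfl <;> norm_num
  · refine ⟨B.sign, ?_, ?_, ?_⟩
    · rcases Int.lt_or_lt_of_ne hB with hl | hl
      · right; exact Int.sign_eq_neg_one_of_neg hl
      · left; exact Int.sign_eq_one_of_pos hl
    · have : ((A : ℚ) / B) = Rat.divInt A B := (Rat.divInt_eq_div A B).symm
      simp only [mk', if_neg hB, num', this]
      rw [Rat.num_divInt, Int.gcd_comm, h]
      simp [mul_comm]
    · have : ((A : ℚ) / B) = Rat.divInt A B := (Rat.divInt_eq_div A B).symm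
      simp only [mk', if_neg hB, den', this]
      rw [Rat.den_divInt, if_neg hB, Int.gcd_comm, h, Nat.div_one]
      rcases Int.lt_or_lt_of_ne hB with hl | hl
      · rw [Int.sign_eq_neg_one_of_neg hl]
        omega
      · rw [Int.sign_eq_one_of_pos hl]
        omega


section YLayer

variable (x : Option ℚ) (a b : ℤ)

/-- The `t`-th neighbour of `x`. -/
def Y (t : ℤ) : Option ℚ := mk' (a + t * num' x) (b + t * den' x)

variable {x a b}

lemma Y_gcd (hab : a * den' x - b * num' x = 1) (t : ℤ) :
    Int.gcd (a + t * num' x) (b + t * den' x) = 1 := by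
  rw [← Int.isCoprime_iff_gcd_eq_one]
  exact ⟨den' x, -(num' x), by linear_combination hab⟩

lemma Y_spec (hab : a * den' x - b * num' x = 1) (t : ℤ) :
    ∃ σ : ℤ, (σ = 1 ∨ σ = -1) ∧ num' (Y x a b t) = σ * (a + t * num' x) ∧
      den' (Y x a b t) = σ * (b + t * den' x) :=
  mk'_spec _ _ (Y_gcd hab t)

lemma det_Y (hab : a * den' x - b * num' x = 1) (s t : ℤ) :
    |num' (Y x a b s) * den' (Y x a b t) - num' (Y x a b t) * den' (Y x a b s)| = |t - s| := by
  obtain ⟨σ, hσ, hn, hd⟩ := Y_spec hab s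
  obtain ⟨τ, hτ, hn', hd'⟩ := Y_spec hab t
  have key : num' (Y x a b s) * den' (Y x a b t) - num' (Y x a b t) * den' (Y x a b s)
      = σ * τ * (t - s) := by
    rw [hn, hd, hn', hd']
    linear_combination (σ * τ * (t - s)) * hab
  rw [key]
  rcases hσ with rfl | rfl <;> rcases hτ with rfl | rfl <;>
    simp [abs_neg, abs_sub_comm]

lemma adj_x_Y (hab : a * den' x - b * num' x = 1) (t : ℤ) :
    fareyGraph.Adj x (Y x a b t) := by
  rw [farey_adj_iff]
  obtain ⟨σ, hσ, hn, hd⟩ := Y_spec hab t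
  have key : num' x * den' (Y x a b t) - num' (Y x a b t) * den' x = σ * (-1) := by
    rw [hn, hd]
    linear_combination (-σ) * hab
  rw [key]
  rcases hσ with rfl | rfl <;> norm_num

lemma adj_Y_iff (hab : a * den' x - b * num' x = 1) (s t : ℤ) :
    fareyGraph.Adj (Y x a b s) (Y x a b t) ↔ |t - s| = 1 := by
  rw [farey_adj_iff, det_Y hab]

lemma Y_inj (hab : a * den' x - b * num' x = 1) {s t : ℤ} (h : Y x a b s = Y x a b t) :
    s = t := by
  have := det_Y hab s t
  rw [h] at this
  simp only [sub_self, abs_zero] at this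
  have := abs_eq_zero.mp this.symm
  omega

lemma Y_surj (hab : a * den' x - b * num' x = 1) (z : Option ℚ)
    (hz : fareyGraph.Adj x z) : ∃ t, Y x a b t = z := by
  set p := num' x with hp
  set q := den' x with hq
  set m := num' z with hm
  set n := den' z with hn
  rw [farey_adj_iff] at hz
  have hz' : p * n - m * q = 1 ∨ p * n - m * q = -1 := by
    rcases abs_eq (by norm_num : (0:ℤ) ≤ 1) |>.mp hz with h | h
    · exact Or.inl h
    · exact Or.inr h
  -- σ = -(p*n - m*q)
  obtain ⟨σ, hσ1, hσeq⟩ : ∃ σ : ℤ, (σ = 1 ∨ σ = -1) ∧ p * n - m * q = -σ := by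
    rcases hz' with h | h
    · exact ⟨-1, Or.inr rfl, by omega⟩
    · exact ⟨1, Or.inl rfl, by omega⟩
  have hkey : p * (n - σ * b) = q * (m - σ * a) := by
    linear_combination hσeq + σ * hab
  have hcop : Int.gcd p q = 1 := coprime_x x
  obtain ⟨t, ht1, ht2⟩ : ∃ t : ℤ, m = σ * a + t * p ∧ n = σ * b + t * q := by
    by_cases hq0 : q = 0
    · -- x = none, p = 1
      have hx : x = none := den'_eq_zero (by rw [← hq]; exact hq0)
      have hp1 : p = 1 := by rw [hp, hx]; rfl
      refine ⟨m - σ * a, by rw [hp1]; ring, ?_⟩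
      have hnb : n = σ * b := by
        have h2 := hkey
        rw [hq0, hp1] at h2
        linarith [h2]
      rw [hnb, hq0]; ring
    · have hdvd : q ∣ p * (n - σ * b) := ⟨m - σ * a, hkey⟩
      have hcop' : IsCoprime q p := (Int.isCoprime_iff_gcd_eq_one.mpr hcop).symm
      obtain ⟨t, ht⟩ := hcop'.dvd_of_dvd_mul_left hdvd
      refine ⟨t, ?_, by linear_combination ht⟩
      have h3 : q * (p * t) = q * (m - σ * a) := by
        rw [← hkey, ht]; ring
      have h4 := mul_left_cancel₀ hq0 h3
      linear_combination -h4
  -- z = Y (σ * t)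
  refine ⟨σ * t, ?_⟩
  have hmz : mk' m n = z := mk'_self z
  have e1 : a + (σ * t) * p = σ * m := by
    rcases hσ1 with rfl | rfl <;> (rw [ht1]; ring)
  have e2 : b + (σ * t) * q = σ * n := by
    rcases hσ1 with rfl | rfl <;> (rw [ht2]; ring)
  show mk' (a + (σ * t) * p) (b + (σ * t) * q) = z
  rw [e1, e2]
  rcases hσ1 with rfl | rfl
  · simpa using hmz
  · rw [show (-1 : ℤ) * m = -m by ring, show (-1 : ℤ) * n = -n by ring, mk'_neg]
    exact hmz

end YLayer

section TriLayer

variable (x : Option ℚ) (a b : ℤ)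

/-- The `t`-th triangle through `x`. -/
def Tri (t : ℤ) : Finset (Option ℚ) := {x, Y x a b t, Y x a b (t + 1)}

variable {x a b}

lemma Y_ne_x (hab : a * den' x - b * num' x = 1) (t : ℤ) : Y x a b t ≠ x :=
  (adj_x_Y hab t).ne'

lemma Tri_isClique (hab : a * den' x - b * num' x = 1) (t : ℤ) :
    fareyGraph.IsNClique 3 (Tri x a b t) :=
  SimpleGraph.is3Clique_triple_iff.mpr
    ⟨adj_x_Y hab t, adj_x_Y hab (t + 1),
      (adj_Y_iff hab t (t + 1)).mpr (by simp)⟩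

lemma Y_inj_iff (hab : a * den' x - b * num' x = 1) {s t : ℤ} :
    Y x a b s = Y x a b t ↔ s = t :=
  ⟨Y_inj hab, fun h => h ▸ rfl⟩

lemma Tri_inj (hab : a * den' x - b * num' x = 1) {s t : ℤ}
    (h : Tri x a b s = Tri x a b t) : s = t := by
  have h1 : Y x a b s ∈ Tri x a b t := by
    rw [← h]; simp [Tri]
  have h2 : Y x a b (s + 1) ∈ Tri x a b t := by
    rw [← h]; simp [Tri]
  simp only [Tri, Finset.mem_insert, Finset.mem_singleton] at h1 h2
  rcases h1 with h1 | h1 | h1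
  · exact absurd h1 (Y_ne_x hab s)
  · exact Y_inj hab h1
  · rcases h2 with h2 | h2 | h2
    · exact absurd h2 (Y_ne_x hab _)
    · have e1 := Y_inj hab h1
      have e2 := Y_inj hab h2
      omega
    · have e1 := Y_inj hab h1
      have e2 := Y_inj hab h2
      omega

lemma Tri_classify (hab : a * den' x - b * num' x = 1) (T : Finset (Option ℚ))
    (hT : fareyGraph.IsNClique 3 T) (hx : x ∈ T) : ∃ t, T = Tri x a b t := by
  obtain ⟨u, v, w, huv, huw, hvw, hs⟩ := Finset.card_eq_three.mp hT.card_eq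
  -- reduce to the form {x, c, d}
  have main : ∀ c d : Option ℚ, c ≠ d → fareyGraph.Adj x c → fareyGraph.Adj x d →
      fareyGraph.Adj c d → ∃ t, ({x, c, d} : Finset (Option ℚ)) = Tri x a b t := by
    intro c d hcd hxc hxd hcd'
    obtain ⟨s, rfl⟩ := Y_surj hab c hxc
    obtain ⟨t, rfl⟩ := Y_surj hab d hxd
    have h1 : |t - s| = 1 := (adj_Y_iff hab s t).mp hcd'
    rw [Int.abs_eq_natAbs] at h1
    have : t = s + 1 ∨ s = t + 1 := by omega
    rcases this with rfl | rfl
    · exact ⟨s, rfl⟩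
    · refine ⟨t, ?_⟩
      show _ = ({x, Y x a b t, Y x a b (t + 1)} : Finset (Option ℚ))
      ext z; simp only [Finset.mem_insert, Finset.mem_singleton]; tauto
  subst hs
  have hcl := hT.isClique
  simp only [Finset.coe_insert, Finset.coe_singleton] at hcl
  have hu : fareyGraph.Adj u v := hcl (by simp) (by simp) huv
  have huw' : fareyGraph.Adj u w := hcl (by simp) (by simp) huw
  have hvw' : fareyGraph.Adj v w := hcl (by simp) (by simp) hvw
  simp only [Finset.mem_insert, Finset.mem_singleton] at hx
  rcases hx with rfl | rfl | rfl
  · exact main v w hvw hu huw' hvw'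
  · obtain ⟨t, ht⟩ := main u w huw hu.symm hvw' huw'
    refine ⟨t, ?_⟩
    rw [← ht]
    ext z; simp only [Finset.mem_insert, Finset.mem_singleton]; tauto
  · obtain ⟨t, ht⟩ := main u v huv huw'.symm hvw'.symm hu
    refine ⟨t, ?_⟩
    rw [← ht]
    ext z; simp only [Finset.mem_insert, Finset.mem_singleton]; tauto

lemma mem_Tri_iff (z : Option ℚ) (t : ℤ) :
    z ∈ Tri x a b t ↔ z = x ∨ z = Y x a b t ∨ z = Y x a b (t + 1) := by
  simp [Tri]

lemma Tri_inter_card (hab : a * den' x - b * num' x = 1) {s t : ℤ}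
    (h : |s - t| = 1) : (Tri x a b s ∩ Tri x a b t).card = 2 := by
  -- WLOG t = s + 1
  have key : ∀ s : ℤ, (Tri x a b s ∩ Tri x a b (s + 1)).card = 2 := by
    intro s
    have : Tri x a b s ∩ Tri x a b (s + 1) = {x, Y x a b (s + 1)} := by
      ext z
      simp only [Finset.mem_inter, mem_Tri_iff, Finset.mem_insert, Finset.mem_singleton]
      constructor
      · rintro ⟨h1 | h1 | h1, h2 | h2 | h2⟩ <;> subst h1 <;>
          first
            | (left; rfl)
            | (right; rfl)
            | (exfalso; revert h2 <;> intro h2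
               first
                 | exact (Y_ne_x hab _) h2
                 | (have := Y_inj hab h2; omega)
                 | (have := Y_inj hab h2.symm; omega))
      · rintro (rfl | rfl)
        · exact ⟨Or.inl rfl, Or.inl rfl⟩
        · exact ⟨Or.inr (Or.inr rfl), Or.inr (Or.inl rfl)⟩
    rw [this]
    exact Finset.card_pair (Ne.symm (Y_ne_x hab _))
  rw [Int.abs_eq_natAbs] at h
  have : t = s + 1 ∨ s = t + 1 := by omega
  rcases this with rfl | rfl
  · exact key s
  · rw [Finset.inter_comm]; exact key t

lemma Tri_inter_far (hab : a * den' x - b * num' x = 1) {s t : ℤ}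
    (hne : s ≠ t) (h : |s - t| ≠ 1) : (Tri x a b s ∩ Tri x a b t).card = 1 := by
  have hfar : 1 < |s - t| := by
    rw [Int.abs_eq_natAbs] at h ⊢
    omega
  have : Tri x a b s ∩ Tri x a b t = {x} := by
    ext z
    simp only [Finset.mem_inter, mem_Tri_iff, Finset.mem_singleton]
    constructor
    · rw [Int.abs_eq_natAbs] at hfar
      rintro ⟨h1 | h1 | h1, h2 | h2 | h2⟩ <;> subst h1 <;>
        first
          | rfl
          | (exfalso
             first
               | exact (Y_ne_x hab _) h2
               | exact (Y_ne_x hab _) h2.symm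
               | (have := Y_inj hab h2; omega)
               | (have := Y_inj hab h2.symm; omega))
    · rintro rfl
      exact ⟨Or.inl rfl, Or.inl rfl⟩
  rw [this, Finset.card_singleton]

end TriLayer
end FanAux


/-- For every vertex `x` of the Farey graph, the subgraph of the model graph `G`
induced on `{x̃} ∪ {T : triangle of 𝔽 with x ∈ T}` is isomorphic to the infinite fan
graph `F∞`, via an isomorphism taking `x̃` to the centre of `F∞`. -/
theorem modelGraph_induced_fan (x : Option ℚ) :
    ∃ φ : (modelGraph.induce
        {v : ModelVertex | v = .inr (.inl x) ∨
          ∃ T : FareyTriangle, x ∈ T.1 ∧ v = .inr (.inr T)}) ≃g fanGraph,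
      ∀ h : (Sum.inr (Sum.inl x) : ModelVertex) ∈
          {v : ModelVertex | v = .inr (.inl x) ∨
            ∃ T : FareyTriangle, x ∈ T.1 ∧ v = .inr (.inr T)},
        φ ⟨.inr (.inl x), h⟩ = none := by
  classical
  obtain ⟨u, v, huv⟩ : IsCoprime (FanAux.num' x) (FanAux.den' x) :=
    Int.isCoprime_iff_gcd_eq_one.mpr (FanAux.coprime_x x)
  set a : ℤ := v with ha
  set b : ℤ := -u with hb
  have hab : a * FanAux.den' x - b * FanAux.num' x = 1 := by
    rw [ha, hb]; linear_combination huv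
  set S : Set ModelVertex :=
    {v : ModelVertex | v = .inr (.inl x) ∨
      ∃ T : FareyTriangle, x ∈ T.1 ∧ v = .inr (.inr T)} with hS
  -- the triangles through x
  let mkT : ℤ → FareyTriangle := fun t => ⟨FanAux.Tri x a b t, FanAux.Tri_isClique hab t⟩
  have hx_mem : ∀ t, x ∈ (mkT t).1 := fun t => Finset.mem_insert_self _ _
  -- the map from the fan
  let g : Option ℤ → S := fun o =>
    match o with
    | none => ⟨.inr (.inl x), Or.inl rfl⟩
    | some t => ⟨.inr (.inr (mkT t)), Or.inr ⟨mkT t, hx_mem t, rfl⟩⟩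
  have hg_inj : Function.Injective g := by
    rintro (_ | s) (_ | t) h
    · rfl
    · exact absurd (congrArg Subtype.val h) (by simp [g])
    · exact absurd (congrArg Subtype.val h) (by simp [g])
    · have h1 : (mkT s : FareyTriangle) = mkT t := by
        have := congrArg Subtype.val h
        simpa [g] using this
      have h2 : FanAux.Tri x a b s = FanAux.Tri x a b t := congrArg Subtype.val h1
      rw [FanAux.Tri_inj hab h2]
  have hg_surj : Function.Surjective g := by
    rintro ⟨w, hw⟩
    rcases hw with rfl | ⟨T, hxT, rfl⟩
    · exact ⟨none, rfl⟩
    · obtain ⟨t, ht⟩ := FanAux.Tri_classify hab T.1 T.2 hxT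
      refine ⟨some t, ?_⟩
      apply Subtype.ext
      show (Sum.inr (Sum.inr (mkT t)) : ModelVertex) = Sum.inr (Sum.inr T)
      have : mkT t = T := Subtype.ext ht.symm
      rw [this]
  -- dual adjacency in terms of indices
  have dual_adj : ∀ s t : ℤ,
      ((mkT s ≠ mkT t ∧ ((mkT s).1 ∩ (mkT t).1).card = 2) ↔ |s - t| = 1) := by
    intro s t
    constructor
    · rintro ⟨hne, hcard⟩
      have hst : s ≠ t := fun h => hne (by rw [h])
      by_contra habs
      have := FanAux.Tri_inter_far hab hst habs
      rw [this] at hcard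
      omega
    · intro h1
      have hst : s ≠ t := by
        rw [Int.abs_eq_natAbs] at h1
        omega
      refine ⟨fun h => hst (FanAux.Tri_inj hab (congrArg Subtype.val h)), ?_⟩
      exact FanAux.Tri_inter_card hab h1
  -- the iso from the fan to the induced graph
  let e : Option ℤ ≃ S := Equiv.ofBijective g ⟨hg_inj, hg_surj⟩
  have he : ∀ o, (e o : ModelVertex) = (g o : ModelVertex) := fun o => rfl
  let ψ : fanGraph ≃g (modelGraph.induce S) := by
    refine ⟨e, ?_⟩
    rintro (_ | s) (_ | t)
    · show modelAdj (Sum.inr (Sum.inl x)) (Sum.inr (Sum.inl x)) ↔ fanAdj none none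
      exact Iff.rfl
    · show modelAdj (Sum.inr (Sum.inl x)) (Sum.inr (Sum.inr (mkT t))) ↔ fanAdj none (some t)
      exact iff_of_true (hx_mem t) trivial
    · show modelAdj (Sum.inr (Sum.inr (mkT s))) (Sum.inr (Sum.inl x)) ↔ fanAdj (some s) none
      exact iff_of_true (hx_mem s) trivial
    · show (mkT s ≠ mkT t ∧ ((mkT s).1 ∩ (mkT t).1).card = 2) ↔ fanAdj (some s) (some t)
      exact dual_adj s t
  refine ⟨ψ.symm, fun h => ?_⟩
  have hnone : ψ none = ⟨.inr (.inl x), h⟩ := Subtype.ext rfl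
  rw [← hnone]
  exact ψ.symm_apply_apply none
end
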